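/- Let n ≥ 3 be an integer, let h : ℝ → ℝ be continuously differentiable with h(r) > 0 for all r, h(0) = 1, h'(0) = 0, h'(r) > 0 for all r > 0, and h'(r) < 0 for all r < 0. Let a₀ > 0 and let R : [0, ∞) → (0, ∞) solve R'(t) = -(n-1)·h'(R(t))/h(R(t)) with R(0) = a₀. Let T ∈ (0, ∞] and let φ : [0, T) → ℝ be differentiable with φ(0) = f̄₀ ∈ (0, 1) and φ'(t) ≥ -2(n-1)·(1 - φ(t))·h'(R(t))²/h(R(t))² for all t ∈ [0, T). Then φ(t) ≥ 1 - (1 - f̄₀)·h(a₀)² for all t ∈ [0, T); in particular, if f̄₀ > 1 - 1/h(a₀)², then φ(t) > 0 for all t ∈ [0, T). -/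

import Mathlib

/-- quantitative gradient lower bound of Theorem 3.7: any function `φ` on
`[0, T)` with `φ(0) = f̄₀ ∈ (0,1)` and `φ' ≥ -2(n-1)(1-φ)·h'(R)²/h(R)²` along the barrier
solution `R` satisfies `φ(t) ≥ 1 - (1 - f̄₀)·h(a₀)²`; in particular `φ > 0` when
`f̄₀ > 1 - 1/h(a₀)²`. -/
theorem stmt_7 (n : ℕ) (hn : 3 ≤ n) (h : ℝ → ℝ) (hC1 : ContDiff ℝ 1 h)
    (hpos : ∀ r : ℝ, 0 < h r) (h0 : h 0 = 1) (hd0 : deriv h 0 = 0)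
    (hdpos : ∀ r : ℝ, 0 < r → 0 < deriv h r)
    (hdneg : ∀ r : ℝ, r < 0 → deriv h r < 0)
    (a₀ : ℝ) (ha₀ : 0 < a₀) (R : ℝ → ℝ) (hR0 : R 0 = a₀)
    (hRpos : ∀ t : ℝ, 0 ≤ t → 0 < R t)
    (hR : ∀ t : ℝ, 0 ≤ t →
      HasDerivAt R (-(n - 1 : ℝ) * deriv h (R t) / h (R t)) t)
    (T : EReal) (hT : 0 < T) (f₀ : ℝ) (hf₀ : 0 < f₀) (hf₀' : f₀ < 1)
    (φ : ℝ → ℝ) (hφ0 : φ 0 = f₀)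
    (hφ : ∀ t : ℝ, 0 ≤ t → (t : EReal) < T →
      ∃ d : ℝ, HasDerivAt φ d t ∧
        -2 * (n - 1 : ℝ) * (1 - φ t) * (deriv h (R t)) ^ 2 / (h (R t)) ^ 2 ≤ d) :
    (∀ t : ℝ, 0 ≤ t → (t : EReal) < T → 1 - (1 - f₀) * (h a₀) ^ 2 ≤ φ t) ∧
    (1 - 1 / (h a₀) ^ 2 < f₀ →
      ∀ t : ℝ, 0 ≤ t → (t : EReal) < T → 0 < φ t) := by
  -- h is ≥ 1 on [0, ∞)
  have hmono : StrictMonoOn h (Set.Ici (0:ℝ)) := by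
    apply strictMonoOn_of_deriv_pos (convex_Ici 0) (hC1.continuous.continuousOn)
    intro x hx
    rw [interior_Ici] at hx
    exact hdpos x hx
  have hge1 : ∀ r : ℝ, 0 ≤ r → 1 ≤ h r := by
    intro r hr
    rcases eq_or_lt_of_le hr with he | hlt
    · rw [← he, h0]
    · have := hmono (Set.mem_Ici.mpr le_rfl) (Set.mem_Ici.mpr hr) hlt
      rw [h0] at this; linarith
  set g : ℝ → ℝ := fun s => (1 - φ s) * (h (R s)) ^ 2 with hg
  -- main bound
  have main : ∀ t : ℝ, 0 ≤ t → (t : EReal) < T → 1 - (1 - f₀) * (h a₀) ^ 2 ≤ φ t := by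
    intro t ht0 htT
    have hcoe : ∀ s : ℝ, s ≤ t → (s : EReal) < T := by
      intro s hs
      exact lt_of_le_of_lt (EReal.coe_le_coe_iff.mpr hs) htT
    -- derivative of g on [0, t]
    have hderiv : ∀ s ∈ Set.Icc (0:ℝ) t, ∃ dg : ℝ, HasDerivAt g dg s ∧ dg ≤ 0 := by
      rintro s ⟨hs0, hst⟩
      obtain ⟨d, hd, hdge⟩ := hφ s hs0 (hcoe s hst)
      have hH : 0 < h (R s) := hpos (R s)
      have hhR : HasDerivAt (fun x => h (R x))
          (deriv h (R s) * (-(n - 1 : ℝ) * deriv h (R s) / h (R s))) s :=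
        ((hC1.differentiable one_ne_zero).differentiableAt.hasDerivAt).comp s (hR s hs0)
      have hsq : HasDerivAt (fun x => (h (R x)) ^ 2)
          ((2:ℕ) * (h (R s)) ^ 1 * (deriv h (R s) * (-(n - 1 : ℝ) * deriv h (R s) / h (R s)))) s :=
        hhR.pow 2
      have hφd : HasDerivAt (fun x => 1 - φ x) (-d) s := by
        exact hd.const_sub 1
      have hgd : HasDerivAt g
          (-d * (h (R s)) ^ 2 + (1 - φ s) *
            ((2:ℕ) * (h (R s)) ^ 1 * (deriv h (R s) * (-(n - 1 : ℝ) * deriv h (R s) / h (R s))))) s :=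
        hφd.mul hsq
      refine ⟨_, hgd, ?_⟩
      set a := deriv h (R s)
      set H := h (R s)
      have hH2 : (0:ℝ) < H ^ 2 := by positivity
      have key : -2 * (n - 1 : ℝ) * (1 - φ s) * a ^ 2 ≤ d * H ^ 2 := by
        have := (div_le_iff₀ hH2).mp hdge
        linarith
      have heq : (1 - φ s) * ((2:ℕ) * H ^ 1 * (a * (-(n - 1 : ℝ) * a / H)))
          = -2 * (n - 1 : ℝ) * (1 - φ s) * a ^ 2 := by
        field_simp
        ring
      rw [heq]
      linarith
    have hcont : ContinuousOn g (Set.Icc 0 t) := by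
      intro s hs
      obtain ⟨dg, hgd, _⟩ := hderiv s hs
      exact hgd.continuousAt.continuousWithinAt
    have hdiff : DifferentiableOn ℝ g (interior (Set.Icc (0:ℝ) t)) := by
      intro s hs
      have hs' : s ∈ Set.Icc (0:ℝ) t := interior_subset hs
      obtain ⟨dg, hgd, _⟩ := hderiv s hs'
      exact hgd.differentiableAt.differentiableWithinAt
    have hanti : AntitoneOn g (Set.Icc 0 t) := by
      apply antitoneOn_of_deriv_nonpos (convex_Icc 0 t) hcont hdiff
      intro s hs
      have hs' : s ∈ Set.Icc (0:ℝ) t := interior_subset hs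
      obtain ⟨dg, hgd, hle⟩ := hderiv s hs'
      rw [hgd.deriv]
      exact hle
    have hgt : g t ≤ g 0 :=
      hanti (Set.mem_Icc.mpr ⟨le_rfl, ht0⟩) (Set.mem_Icc.mpr ⟨ht0, le_rfl⟩) ht0
    have hg0 : g 0 = (1 - f₀) * (h a₀) ^ 2 := by
      simp [hg, hφ0, hR0]
    rw [hg0] at hgt
    have hHt : 1 ≤ h (R t) := hge1 (R t) (le_of_lt (hRpos t ht0))
    have hHt2 : 1 ≤ (h (R t)) ^ 2 := by nlinarith
    have hC : 0 ≤ (1 - f₀) * (h a₀) ^ 2 := by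
      have := hpos a₀; nlinarith
    -- from (1 - φ t) * h(R t)^2 ≤ C with h(R t)^2 ≥ 1, C ≥ 0
    rcases le_or_gt (1 - φ t) 0 with hcase | hcase
    · linarith
    · have : (1 - φ t) * 1 ≤ (1 - φ t) * (h (R t)) ^ 2 :=
        mul_le_mul_of_nonneg_left hHt2 (le_of_lt hcase)
      simp only [hg] at hgt
      linarith
  refine ⟨main, ?_⟩
  intro hf t ht0 htT
  have := main t ht0 htT
  have hha : 0 < h a₀ := hpos a₀
  have hha2 : 0 < (h a₀) ^ 2 := by positivity
  have : (1 - f₀) * (h a₀) ^ 2 < 1 := by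
    have h1 : 1 - f₀ < 1 / (h a₀) ^ 2 := by linarith
    calc (1 - f₀) * (h a₀) ^ 2 < (1 / (h a₀) ^ 2) * (h a₀) ^ 2 :=
          mul_lt_mul_of_pos_right h1 hha2
      _ = 1 := by field_simp
  linarith
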